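/- arXiv:1403.3348 — 2 statements merged into one kernel-verified Lean document; each statement's English description precedes it below -/
import Mathlib

section
/- Let X be a Banach space and E, F Banach lattices such that E has the dual positive Schur property and F has property (d). If R : X → E is a bounded linear operator and S : E → F is a positive operator, then the composition S ∘ R : X → F is almost limited. -/
open Filter Topology Metric Set NormedSpace BoundedContinuousFunction

noncomputable section

/-- The value `|f| x` of the modulus of a functional `f` in the dual of a Banach lattice,
at a positive element `x`, given by the Riesz–Kantorovich formula. -/
def dualAbs {E : Type*} [NormedAddCommGroup E] [Lattice E] [IsOrderedAddMonoid E] [HasSolidNorm E] [NormedSpace ℝ E]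
    (f : E →L[ℝ] ℝ) (x : E) : ℝ :=
  sSup {r : ℝ | ∃ z : E, |z| ≤ x ∧ r = |f z|}

/-- Two functionals `f, g` on a Banach lattice are disjoint, i.e. `|f| ⊓ |g| = 0` in the dual
lattice; by the Riesz–Kantorovich formula this means that for every `x ≥ 0` the infimum of
`|f| y + |g| (x - y)` over `0 ≤ y ≤ x` is `0`. -/
def DualDisjoint {E : Type*} [NormedAddCommGroup E] [Lattice E] [IsOrderedAddMonoid E] [HasSolidNorm E] [NormedSpace ℝ E]
    (f g : E →L[ℝ] ℝ) : Prop :=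
  ∀ x : E, 0 ≤ x → ∀ ε : ℝ, 0 < ε →
    ∃ y : E, 0 ≤ y ∧ y ≤ x ∧ dualAbs f y + dualAbs g (x - y) < ε

/-- A sequence of functionals is weak* null if it converges to `0` pointwise. -/
def WeakStarNull {E : Type*} [NormedAddCommGroup E] [NormedSpace ℝ E]
    (f : ℕ → E →L[ℝ] ℝ) : Prop :=
  ∀ x : E, Tendsto (fun n => f n x) atTop (𝓝 0)

/-- A functional on a Banach lattice is positive if it is nonnegative on the positive cone. -/
def PositiveFunctional {E : Type*} [NormedAddCommGroup E] [Lattice E] [IsOrderedAddMonoid E] [HasSolidNorm E] [NormedSpace ℝ E]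
    (f : E →L[ℝ] ℝ) : Prop :=
  ∀ x : E, 0 ≤ x → 0 ≤ f x

/-- An operator between Banach lattices is positive if it maps the positive cone into
the positive cone. -/
def IsPositiveOp {E F : Type*} [NormedAddCommGroup E] [Lattice E] [IsOrderedAddMonoid E] [HasSolidNorm E] [NormedSpace ℝ E]
    [NormedAddCommGroup F] [Lattice F] [IsOrderedAddMonoid F] [HasSolidNorm F] [NormedSpace ℝ F] (T : E →L[ℝ] F) : Prop :=
  ∀ x : E, 0 ≤ x → 0 ≤ T x

/-- An operator `T : X → E` into a Banach lattice is almost limited if `‖T* fₙ‖ → 0` for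
every disjoint weak* null sequence `(fₙ)` in `E*`. -/
def AlmostLimited {X E : Type*} [NormedAddCommGroup X] [NormedSpace ℝ X]
    [NormedAddCommGroup E] [Lattice E] [IsOrderedAddMonoid E] [HasSolidNorm E] [NormedSpace ℝ E] (T : X →L[ℝ] E) : Prop :=
  ∀ f : ℕ → E →L[ℝ] ℝ, WeakStarNull f → Pairwise (fun n m => DualDisjoint (f n) (f m)) →
    Tendsto (fun n => ‖(f n).comp T‖) atTop (𝓝 0)

/-- A Banach lattice `E` has property (d) if `|fₙ| → 0` in the weak* topology for every
disjoint weak* null sequence `(fₙ)` in `E*` (it suffices to test `|fₙ|` on the positive cone). -/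
def PropertyD (E : Type*) [NormedAddCommGroup E] [Lattice E] [IsOrderedAddMonoid E] [HasSolidNorm E] [NormedSpace ℝ E] : Prop :=
  ∀ f : ℕ → E →L[ℝ] ℝ, WeakStarNull f → Pairwise (fun n m => DualDisjoint (f n) (f m)) →
    ∀ x : E, 0 ≤ x → Tendsto (fun n => dualAbs (f n) x) atTop (𝓝 0)

/-- A Banach lattice `E` has the dual positive Schur property if every weak* null sequence of
positive functionals is norm null. -/
def DualPositiveSchur (E : Type*) [NormedAddCommGroup E] [Lattice E] [IsOrderedAddMonoid E] [HasSolidNorm E] [NormedSpace ℝ E] : Prop :=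
  ∀ f : ℕ → E →L[ℝ] ℝ, WeakStarNull f → (∀ n, PositiveFunctional (f n)) →
    Tendsto (fun n => ‖f n‖) atTop (𝓝 0)

/-- A Banach lattice `F` has the positive Schur property if every weakly null sequence of
positive elements is norm null. -/
def PositiveSchur (F : Type*) [NormedAddCommGroup F] [Lattice F] [IsOrderedAddMonoid F] [HasSolidNorm F] [NormedSpace ℝ F] : Prop :=
  ∀ x : ℕ → F, (∀ g : F →L[ℝ] ℝ, Tendsto (fun n => g (x n)) atTop (𝓝 0)) →
    (∀ n, 0 ≤ x n) → Tendsto (fun n => ‖x n‖) atTop (𝓝 0)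

/-- An operator is weakly compact if the image of the closed unit ball is relatively
compact in the weak topology. -/
def IsWeaklyCompactOp {X Y : Type*} [NormedAddCommGroup X] [NormedSpace ℝ X]
    [NormedAddCommGroup Y] [NormedSpace ℝ Y] (T : X →L[ℝ] Y) : Prop :=
  IsCompact (closure (toWeakSpaceCLM ℝ Y '' (T '' closedBall 0 1)))

/-- A lattice is σ-Dedekind complete if every countable nonempty order-bounded subset has a
supremum. -/
def SigmaDedekindComplete (E : Type*) [Lattice E] : Prop :=
  ∀ s : Set E, s.Countable → s.Nonempty → BddAbove s → ∃ a, IsLUB s a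

/-- The norm of a Banach lattice is order continuous if `x_α ↓ 0` implies `‖x_α‖ ↓ 0`,
for every decreasing net `(x_α)` with infimum `0`. -/
def HasOrderContinuousNorm (E : Type*) [NormedAddCommGroup E] [Lattice E] [IsOrderedAddMonoid E] [HasSolidNorm E] : Prop :=
  ∀ ⦃ι : Type*⦄ [Preorder ι] [Nonempty ι] [IsDirected ι (· ≤ ·)] (x : ι → E),
    Antitone x → IsGLB (Set.range x) 0 → Tendsto (fun i => ‖x i‖) atTop (𝓝 0)

/-- A Banach space is reflexive if the canonical embedding into its double dual is
surjective. -/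
def ReflexiveSpace (X : Type*) [NormedAddCommGroup X] [NormedSpace ℝ X] : Prop :=
  Function.Surjective (inclusionInDoubleDual ℝ X)

/-- The Banach lattice `ℓ^∞` of bounded real sequences. -/
abbrev LinftySeq : Type := ℕ →ᵇ ℝ


section AuxLemmas
variable {F : Type*} [NormedAddCommGroup F] [Lattice F] [IsOrderedAddMonoid F] [HasSolidNorm F] [NormedSpace ℝ F] [PosSMulStrictMono ℝ F] [PosSMulReflectLT ℝ F]

lemma dualAbsSet_le (f : F →L[ℝ] ℝ) (x : F) {r : ℝ}
    (hr : r ∈ {r : ℝ | ∃ z : F, |z| ≤ x ∧ r = |f z|}) : r ≤ ‖f‖ * ‖x‖ := by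
  obtain ⟨z, hz, rfl⟩ := hr
  have h1 : ‖z‖ ≤ ‖x‖ := HasSolidNorm.solid (hz.trans (le_abs_self x))
  calc |f z| = ‖f z‖ := (Real.norm_eq_abs _).symm
    _ ≤ ‖f‖ * ‖z‖ := f.le_opNorm z
    _ ≤ ‖f‖ * ‖x‖ := mul_le_mul_of_nonneg_left h1 (norm_nonneg f)

lemma dualAbsSet_bddAbove (f : F →L[ℝ] ℝ) (x : F) :
    BddAbove {r : ℝ | ∃ z : F, |z| ≤ x ∧ r = |f z|} :=
  ⟨‖f‖ * ‖x‖, fun _ hr => dualAbsSet_le f x hr⟩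

lemma le_dualAbs (f : F →L[ℝ] ℝ) {z x : F} (hz : |z| ≤ x) : |f z| ≤ dualAbs f x :=
  le_csSup (dualAbsSet_bddAbove f x) ⟨z, hz, rfl⟩

lemma dualAbs_nonneg (f : F →L[ℝ] ℝ) (x : F) : 0 ≤ dualAbs f x :=
  Real.sSup_nonneg (by rintro r ⟨z, hz, rfl⟩; exact abs_nonneg _)

lemma dualAbs_le (f : F →L[ℝ] ℝ) (x : F) : dualAbs f x ≤ ‖f‖ * ‖x‖ :=
  Real.sSup_le (fun _ hr => dualAbsSet_le f x hr) (by positivity)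

lemma dualAbs_zero (f : F →L[ℝ] ℝ) : dualAbs f 0 = 0 :=
  le_antisymm (by simpa using dualAbs_le f 0) (dualAbs_nonneg f 0)

lemma abs_smul_le_of_nonneg {c : ℝ} (hc : 0 ≤ c) (z : F) : |c • z| ≤ c • |z| := by
  refine abs_le'.2 ⟨smul_le_smul_of_nonneg_left (le_abs_self z) hc, ?_⟩
  rw [← smul_neg]
  exact smul_le_smul_of_nonneg_left (neg_le_abs z) hc

lemma dualAbs_smul (f : F →L[ℝ] ℝ) {c : ℝ} (hc : 0 ≤ c) (x : F) :
    dualAbs f (c • x) = c * dualAbs f x := by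
  rcases hc.eq_or_lt with rfl | hc
  · simp [dualAbs_zero]
  apply le_antisymm
  · refine Real.sSup_le ?_ (mul_nonneg hc.le (dualAbs_nonneg f x))
    rintro r ⟨z, hz, rfl⟩
    have hw : |c⁻¹ • z| ≤ x := by
      refine (abs_smul_le_of_nonneg (by positivity) z).trans ?_
      calc c⁻¹ • |z| ≤ c⁻¹ • (c • x) :=
            smul_le_smul_of_nonneg_left hz (by positivity)
        _ = x := inv_smul_smul₀ hc.ne' x
    have : |f (c⁻¹ • z)| ≤ dualAbs f x := le_dualAbs f hw
    have hz' : |f z| = c * |f (c⁻¹ • z)| := by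
      rw [map_smul, smul_eq_mul, abs_mul, abs_inv, abs_of_pos hc]
      field_simp
    rw [hz']
    exact mul_le_mul_of_nonneg_left this hc.le
  · have key : dualAbs f x ≤ c⁻¹ * dualAbs f (c • x) := by
      refine Real.sSup_le ?_ (mul_nonneg (by positivity) (dualAbs_nonneg f _))
      rintro r ⟨z, hz, rfl⟩
      have hw : |c • z| ≤ c • x :=
        (abs_smul_le_of_nonneg hc.le z).trans (smul_le_smul_of_nonneg_left hz hc.le)
      have h2 : |f (c • z)| ≤ dualAbs f (c • x) := le_dualAbs f hw
      have h3 : |f (c • z)| = c * |f z| := by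
        rw [map_smul, smul_eq_mul, abs_mul, abs_of_pos hc]
      rw [h3] at h2
      calc |f z| = c⁻¹ * (c * |f z|) := by field_simp
        _ ≤ c⁻¹ * dualAbs f (c • x) :=
            mul_le_mul_of_nonneg_left h2 (by positivity)
    calc c * dualAbs f x ≤ c * (c⁻¹ * dualAbs f (c • x)) :=
          mul_le_mul_of_nonneg_left key hc.le
      _ = dualAbs f (c • x) := by field_simp

lemma dualAbs_mono (f : F →L[ℝ] ℝ) {x y : F} (h : x ≤ y) : dualAbs f x ≤ dualAbs f y := by
  refine Real.sSup_le ?_ (dualAbs_nonneg f y)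
  rintro r ⟨z, hz, rfl⟩
  exact le_dualAbs f (hz.trans h)

/-- Riesz decomposition in a lattice-ordered group. -/
lemma riesz_decomp {a b z : F} (ha : 0 ≤ a) (hb : 0 ≤ b) (hz : |z| ≤ a + b) :
    ∃ z₁ z₂ : F, z = z₁ + z₂ ∧ |z₁| ≤ a ∧ |z₂| ≤ b := by
  have hz1 : -(a + b) ≤ z := neg_le.1 ((neg_le_abs z).trans hz)
  have hz2 : z ≤ a + b := (le_abs_self z).trans hz
  set z₁ : F := (z ⊔ -a) ⊓ a with hz₁def
  have hlow : -a ≤ z₁ := le_inf le_sup_right (neg_le_self ha)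
  refine ⟨z₁, z - z₁, by abel, ?_, ?_⟩
  · exact abs_le'.2 ⟨inf_le_right, neg_le.2 hlow⟩
  · have hrw : z - z₁ = (0 ⊓ (z + a)) ⊔ (z - a) := by
      rw [hz₁def, sub_inf, sub_sup, sub_self, sub_neg_eq_add]
    have h5 : -b ≤ z + a := by
      rw [← sub_le_iff_le_add]
      calc -b - a = -(a + b) := by abel
        _ ≤ z := hz1
    refine abs_le'.2 ⟨?_, ?_⟩
    · rw [hrw]
      exact sup_le (inf_le_left.trans hb) (sub_le_iff_le_add'.2 hz2)
    · rw [neg_le, hrw]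
      exact le_sup_of_le_left (le_inf (neg_nonpos.2 hb) h5)

lemma dualAbs_add (f : F →L[ℝ] ℝ) {a b : F} (ha : 0 ≤ a) (hb : 0 ≤ b) :
    dualAbs f (a + b) = dualAbs f a + dualAbs f b := by
  have core : ∀ z₁ z₂ : F, |z₁| ≤ a → |z₂| ≤ b →
      |f z₁| + |f z₂| ≤ dualAbs f (a + b) := by
    intro z₁ z₂ h₁ h₂
    obtain ⟨w₁, hw₁, hfw₁⟩ : ∃ w : F, |w| ≤ a ∧ f w = |f z₁| := by
      rcases le_or_gt 0 (f z₁) with h | h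
      · exact ⟨z₁, h₁, (abs_of_nonneg h).symm⟩
      · exact ⟨-z₁, by rwa [abs_neg], by rw [map_neg, abs_of_neg h]⟩
    obtain ⟨w₂, hw₂, hfw₂⟩ : ∃ w : F, |w| ≤ b ∧ f w = |f z₂| := by
      rcases le_or_gt 0 (f z₂) with h | h
      · exact ⟨z₂, h₂, (abs_of_nonneg h).symm⟩
      · exact ⟨-z₂, by rwa [abs_neg], by rw [map_neg, abs_of_neg h]⟩
    have hsum : |w₁ + w₂| ≤ a + b := (abs_add_le w₁ w₂).trans (add_le_add hw₁ hw₂)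
    have h6 := le_dualAbs f hsum
    rw [map_add, hfw₁, hfw₂, abs_of_nonneg (by positivity)] at h6
    exact h6
  apply le_antisymm
  · refine Real.sSup_le ?_ (add_nonneg (dualAbs_nonneg f a) (dualAbs_nonneg f b))
    rintro r ⟨z, hz, rfl⟩
    obtain ⟨z₁, z₂, rfl, h₁, h₂⟩ := riesz_decomp ha hb hz
    calc |f (z₁ + z₂)| ≤ |f z₁| + |f z₂| := by rw [map_add]; exact abs_add_le _ _
      _ ≤ dualAbs f a + dualAbs f b := add_le_add (le_dualAbs f h₁) (le_dualAbs f h₂)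
  · have step : dualAbs f a ≤ dualAbs f (a + b) - dualAbs f b := by
      refine Real.sSup_le ?_ ?_
      · rintro r ⟨z₁, h₁, rfl⟩
        have : dualAbs f b ≤ dualAbs f (a + b) - |f z₁| := by
          refine Real.sSup_le ?_ ?_
          · rintro s ⟨z₂, h₂, rfl⟩
            linarith [core z₁ z₂ h₁ h₂]
          · have : |f z₁| ≤ dualAbs f (a + b) :=
              le_dualAbs f (h₁.trans (le_add_of_nonneg_right hb))
            linarith
        linarith
      · have : dualAbs f b ≤ dualAbs f (a + b) :=
          dualAbs_mono f (le_add_of_nonneg_left ha)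
        linarith
    linarith

end AuxLemmas

/-- If `E` has the dual positive Schur property, `F` has property (d), and
`S : E → F` is positive, then `S ∘ R` is almost limited for any operator `R : X → E`. -/
theorem almostLimited_comp_of_dualPositiveSchur
    {X E F : Type*} [NormedAddCommGroup X] [NormedSpace ℝ X] [CompleteSpace X]
    [NormedAddCommGroup E] [Lattice E] [IsOrderedAddMonoid E] [HasSolidNorm E] [NormedSpace ℝ E] [PosSMulStrictMono ℝ E] [PosSMulReflectLT ℝ E] [CompleteSpace E]
    [NormedAddCommGroup F] [Lattice F] [IsOrderedAddMonoid F] [HasSolidNorm F] [NormedSpace ℝ F] [PosSMulStrictMono ℝ F] [PosSMulReflectLT ℝ F] [CompleteSpace F]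
    (hE : DualPositiveSchur E) (hF : PropertyD F)
    (R : X →L[ℝ] E) (S : E →L[ℝ] F) (hS : IsPositiveOp S) :
    AlmostLimited (S.comp R) := by
  intro f hWN hpair
  -- `S` dominates absolute values: `|S z| ≤ S |z|`.
  have habsS : ∀ z : E, |S z| ≤ S |z| := by
    intro z
    refine abs_le'.2 ⟨?_, ?_⟩
    · have h := hS _ (sub_nonneg.2 (le_abs_self z))
      rw [map_sub] at h
      exact sub_nonneg.1 h
    · have h := hS _ (sub_nonneg.2 (neg_le_abs z))
      rw [map_sub, map_neg, sub_neg_eq_add] at h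
      exact neg_le_iff_add_nonneg.2 h
  set gf : (F →L[ℝ] ℝ) → E → ℝ :=
    fun φ x => dualAbs φ (S x⁺) - dualAbs φ (S x⁻) with hgf
  have hadd : ∀ (φ : F →L[ℝ] ℝ) (a b : E), 0 ≤ a → 0 ≤ b →
      dualAbs φ (S (a + b)) = dualAbs φ (S a) + dualAbs φ (S b) := by
    intro φ a b ha hb
    rw [map_add]
    exact dualAbs_add φ (hS a ha) (hS b hb)
  have hkey : ∀ (φ : F →L[ℝ] ℝ) (a b : E), 0 ≤ a → 0 ≤ b →
      gf φ (a - b) = dualAbs φ (S a) - dualAbs φ (S b) := by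
    intro φ a b ha hb
    have h := posPart_sub_negPart (a - b)
    rw [sub_eq_sub_iff_add_eq_add] at h
    have e1 := hadd φ ((a - b)⁺) b (posPart_nonneg _) hb
    have e2 := hadd φ a ((a - b)⁻) ha (negPart_nonneg _)
    rw [h, e2] at e1
    simp only [hgf]
    linarith
  have hmap_add : ∀ (φ : F →L[ℝ] ℝ) (x y : E), gf φ (x + y) = gf φ x + gf φ y := by
    intro φ x y
    have h1 := posPart_sub_negPart x
    have h2 := posPart_sub_negPart y
    have hx : x + y = (x⁺ + y⁺) - (x⁻ + y⁻) := by
      calc x + y = (x⁺ - x⁻) + (y⁺ - y⁻) := by rw [h1, h2]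
        _ = (x⁺ + y⁺) - (x⁻ + y⁻) := by abel
    rw [hx, hkey φ _ _ (add_nonneg (posPart_nonneg x) (posPart_nonneg y))
        (add_nonneg (negPart_nonneg x) (negPart_nonneg y)),
      hadd φ _ _ (posPart_nonneg x) (posPart_nonneg y),
      hadd φ _ _ (negPart_nonneg x) (negPart_nonneg y)]
    simp only [hgf]
    ring
  have hmap_smul : ∀ (φ : F →L[ℝ] ℝ) (c : ℝ) (x : E), gf φ (c • x) = c * gf φ x := by
    intro φ c x
    rcases le_or_gt 0 c with hc | hc
    · have hx : c • x = (c • x⁺) - (c • x⁻) := by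
        rw [← smul_sub, posPart_sub_negPart]
      rw [hx, hkey φ _ _ (smul_nonneg hc (posPart_nonneg x))
          (smul_nonneg hc (negPart_nonneg x)), map_smul, map_smul,
        dualAbs_smul φ hc, dualAbs_smul φ hc]
      simp only [hgf]
      ring
    · have hc' : (0:ℝ) ≤ -c := by linarith
      have h1 : x⁻ - x⁺ = -x := by rw [← neg_sub, posPart_sub_negPart]
      have hx : c • x = ((-c) • x⁻) - ((-c) • x⁺) := by
        rw [← smul_sub, h1, smul_neg, neg_smul, neg_neg]
      rw [hx, hkey φ _ _ (smul_nonneg hc' (negPart_nonneg x))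
          (smul_nonneg hc' (posPart_nonneg x)), map_smul, map_smul,
        dualAbs_smul φ hc', dualAbs_smul φ hc']
      simp only [hgf]
      ring
  have hbound : ∀ (φ : F →L[ℝ] ℝ) (x : E), |gf φ x| ≤ 2 * ‖φ‖ * ‖S‖ * ‖x‖ := by
    intro φ x
    have hxp : ‖x⁺‖ ≤ ‖x‖ := by
      refine HasSolidNorm.solid ?_
      rw [abs_of_nonneg (posPart_nonneg x), posPart_def]
      exact sup_le (le_abs_self x) (abs_nonneg x)
    have hxn : ‖x⁻‖ ≤ ‖x‖ := by
      refine HasSolidNorm.solid ?_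
      rw [abs_of_nonneg (negPart_nonneg x), negPart_def]
      exact sup_le (neg_le_abs x) (abs_nonneg x)
    have h1 : dualAbs φ (S x⁺) ≤ ‖φ‖ * (‖S‖ * ‖x‖) := by
      refine (dualAbs_le φ _).trans (mul_le_mul_of_nonneg_left ?_ (norm_nonneg φ))
      exact (S.le_opNorm _).trans (mul_le_mul_of_nonneg_left hxp (norm_nonneg S))
    have h2 : dualAbs φ (S x⁻) ≤ ‖φ‖ * (‖S‖ * ‖x‖) := by
      refine (dualAbs_le φ _).trans (mul_le_mul_of_nonneg_left ?_ (norm_nonneg φ))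
      exact (S.le_opNorm _).trans (mul_le_mul_of_nonneg_left hxn (norm_nonneg S))
    have h3 : 0 ≤ dualAbs φ (S x⁺) := dualAbs_nonneg φ _
    have h4 : 0 ≤ dualAbs φ (S x⁻) := dualAbs_nonneg φ _
    have hM : 2 * ‖φ‖ * ‖S‖ * ‖x‖ = 2 * (‖φ‖ * (‖S‖ * ‖x‖)) := by ring
    simp only [hgf]
    rw [abs_le]
    constructor <;> [linarith; linarith]
  let G : ℕ → E →L[ℝ] ℝ := fun n =>
    LinearMap.mkContinuous
      { toFun := gf (f n)
        map_add' := hmap_add (f n)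
        map_smul' := fun c x => by simpa using hmap_smul (f n) c x }
      (2 * ‖f n‖ * ‖S‖) (fun x => by
        rw [Real.norm_eq_abs]
        exact hbound (f n) x)
  have hGcoe : ∀ (n : ℕ) (x : E), G n x = gf (f n) x := fun _ _ => rfl
  have hval : ∀ (n : ℕ) (y : E), 0 ≤ y → G n y = dualAbs (f n) (S y) := by
    intro n y hy
    have h := hkey (f n) y 0 hy le_rfl
    rw [sub_zero, map_zero, dualAbs_zero, sub_zero] at h
    rw [hGcoe n y, h]
  have hWSN : WeakStarNull G := by
    intro x
    have h1 := hF f hWN hpair (S x⁺) (hS _ (posPart_nonneg x))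
    have h2 := hF f hWN hpair (S x⁻) (hS _ (negPart_nonneg x))
    have h3 := h1.sub h2
    rw [sub_zero] at h3
    simpa only [hGcoe, hgf] using h3
  have hGpos : ∀ n, PositiveFunctional (G n) := by
    intro n x hx
    rw [hval n x hx]
    exact dualAbs_nonneg _ _
  have hnorm := hE G hWSN hGpos
  have hb : ∀ n, ‖(f n).comp (S.comp R)‖ ≤ ‖G n‖ * ‖R‖ := by
    intro n
    refine ContinuousLinearMap.opNorm_le_bound _
      (mul_nonneg (norm_nonneg _) (norm_nonneg _)) fun x => ?_
    set y : E := |R x| with hy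
    have h2 : |(f n) (S (R x))| ≤ dualAbs (f n) (S y) :=
      le_dualAbs (f n) (habsS (R x))
    have h3 : dualAbs (f n) (S y) = G n y :=
      (hval n y (hy ▸ abs_nonneg (R x))).symm
    have h4 : G n y ≤ ‖G n‖ * ‖R x‖ :=
      calc G n y ≤ |G n y| := le_abs_self _
        _ = ‖G n y‖ := (Real.norm_eq_abs _).symm
        _ ≤ ‖G n‖ * ‖y‖ := (G n).le_opNorm _
        _ = ‖G n‖ * ‖R x‖ := by rw [hy, norm_abs_eq_norm]
    calc ‖((f n).comp (S.comp R)) x‖ = |(f n) (S (R x))| := by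
          simp [Real.norm_eq_abs]
      _ ≤ ‖G n‖ * ‖R x‖ := by rw [h3] at h2; exact h2.trans h4
      _ ≤ ‖G n‖ * (‖R‖ * ‖x‖) :=
          mul_le_mul_of_nonneg_left (R.le_opNorm x) (norm_nonneg _)
      _ = ‖G n‖ * ‖R‖ * ‖x‖ := by ring
  refine squeeze_zero (fun n => norm_nonneg _) hb ?_
  simpa using hnorm.mul_const ‖R‖
end
end

section
/- If a Banach lattice E is not reflexive, then there exists a sequence (f_n) of positive functionals in the closed unit ball of E* which has no weakly convergent subsequence. -/
set_option linter.unusedSectionVars false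
set_option linter.unusedVariables false
set_option maxHeartbeats 1000000



open Filter Topology Metric Set NormedSpace BoundedContinuousFunction

noncomputable section

namespace PosDev

variable {E : Type*} [NormedAddCommGroup E] [Lattice E] [IsOrderedAddMonoid E] [HasSolidNorm E] [NormedSpace ℝ E]

/-- Riesz–Kantorovich sup on the positive cone. -/
def sP (f : E →L[ℝ] ℝ) (x : E) : ℝ := sSup (f '' Set.Icc 0 x)

variable (f : E →L[ℝ] ℝ) {x x₁ x₂ y : E}

lemma norm_le_of_mem_Icc (hy : y ∈ Set.Icc 0 x) : ‖y‖ ≤ ‖x‖ := by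
  obtain ⟨h0, hx⟩ := hy
  refine HasSolidNorm.solid ?_
  rwa [abs_of_nonneg h0, abs_of_nonneg (h0.trans hx)]

lemma sP_bddAbove (hx : 0 ≤ x) : BddAbove (f '' Set.Icc 0 x) := by
  refine ⟨‖f‖ * ‖x‖, ?_⟩
  rintro r ⟨y, hy, rfl⟩
  calc f y ≤ |f y| := le_abs_self _
  _ ≤ ‖f‖ * ‖y‖ := by simpa using (f.le_opNorm y)
  _ ≤ ‖f‖ * ‖x‖ := by
      have := norm_le_of_mem_Icc (x := x) hy
      nlinarith [norm_nonneg (f : E →L[ℝ] ℝ)]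

lemma sP_nonempty (hx : 0 ≤ x) : (f '' Set.Icc 0 x).Nonempty :=
  ⟨f 0, 0, ⟨le_refl 0, hx⟩, rfl⟩

lemma le_sP (hy : y ∈ Set.Icc 0 x) : f y ≤ sP f x :=
  le_csSup (sP_bddAbove f (hy.1.trans hy.2)) ⟨y, hy, rfl⟩

lemma sP_le (hx : 0 ≤ x) {c : ℝ} (h : ∀ y ∈ Set.Icc (0:E) x, f y ≤ c) : sP f x ≤ c :=
  csSup_le (sP_nonempty f hx) (by rintro r ⟨y, hy, rfl⟩; exact h y hy)

lemma sP_nonneg (hx : 0 ≤ x) : 0 ≤ sP f x := by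
  simpa using le_sP f ⟨le_refl (0:E), hx⟩

lemma sP_le_norm (hx : 0 ≤ x) : sP f x ≤ ‖f‖ * ‖x‖ := by
  refine sP_le f hx fun y hy => ?_
  calc f y ≤ |f y| := le_abs_self _
  _ ≤ ‖f‖ * ‖y‖ := by simpa using (f.le_opNorm y)
  _ ≤ ‖f‖ * ‖x‖ := by
      have := norm_le_of_mem_Icc (x := x) hy
      nlinarith [norm_nonneg (f : E →L[ℝ] ℝ)]

lemma sP_zero : sP f 0 = 0 := by
  have h1 : sP f 0 ≤ 0 := sP_le f le_rfl (by rintro y ⟨h0, h1⟩; simp [le_antisymm h1 h0])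
  have h2 : 0 ≤ sP f 0 := sP_nonneg f le_rfl
  linarith

lemma sP_add (h1 : 0 ≤ x₁) (h2 : 0 ≤ x₂) : sP f (x₁ + x₂) = sP f x₁ + sP f x₂ := by
  have hx : (0:E) ≤ x₁ + x₂ := add_nonneg h1 h2
  apply le_antisymm
  · refine sP_le f hx fun y hy => ?_
    obtain ⟨hy0, hyx⟩ := hy
    set y₁ := y ⊓ x₁ with hy₁
    set y₂ := y - y₁ with hy₂
    have hy₁0 : 0 ≤ y₁ := le_inf hy0 h1
    have hy₁x : y₁ ≤ x₁ := inf_le_right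
    have hy₂eq : y₂ = (y - x₁) ⊔ (y - y) := by rw [hy₂, hy₁, sub_inf, sup_comm]
    have hy₂0 : 0 ≤ y₂ := by rw [hy₂eq]; simp
    have hy₂x : y₂ ≤ x₂ := by
      rw [hy₂eq]
      refine sup_le ?_ (by simpa using h2)
      have : y - x₁ ≤ x₂ := sub_le_iff_le_add.2 (by rwa [add_comm])
      exact this
    have : f y = f y₁ + f y₂ := by rw [hy₂]; simp
    rw [this]
    exact add_le_add (le_sP f ⟨hy₁0, hy₁x⟩) (le_sP f ⟨hy₂0, hy₂x⟩)
  · rw [← le_sub_iff_add_le]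
    refine sP_le f h1 fun y₁ hy₁ => ?_
    rw [le_sub_iff_add_le, add_comm, ← le_sub_iff_add_le]
    refine sP_le f h2 fun y₂ hy₂ => ?_
    rw [le_sub_iff_add_le, ← map_add]
    exact le_sP f ⟨add_nonneg hy₂.1 hy₁.1, (add_le_add hy₂.2 hy₁.2).trans_eq (add_comm _ _)⟩

end PosDev

namespace PosDev2
open PosDev

variable {E : Type*} [NormedAddCommGroup E] [Lattice E] [IsOrderedAddMonoid E] [HasSolidNorm E] [NormedSpace ℝ E]

lemma norm_posPart_le (x : E) : ‖x⁺‖ ≤ ‖x‖ := by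
  refine HasSolidNorm.solid ?_
  rw [abs_of_nonneg (posPart_nonneg x)]
  rw [← posPart_add_negPart x]
  exact le_add_of_nonneg_right (negPart_nonneg x)

lemma norm_negPart_le (x : E) : ‖x⁻‖ ≤ ‖x‖ := by
  refine HasSolidNorm.solid ?_
  rw [abs_of_nonneg (negPart_nonneg x)]
  rw [← posPart_add_negPart x]
  exact le_add_of_nonneg_left (posPart_nonneg x)

variable (f : E →L[ℝ] ℝ)

lemma sP_sub_sP {a b c d : E} (ha : 0 ≤ a) (hb : 0 ≤ b) (hc : 0 ≤ c) (hd : 0 ≤ d)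
    (h : a - b = c - d) : sP f a - sP f b = sP f c - sP f d := by
  have hsum : a + d = c + b := sub_eq_sub_iff_add_eq_add.1 h
  have h1 : sP f a + sP f d = sP f c + sP f b := by
    rw [← sP_add f ha hd, ← sP_add f hc hb, hsum]
  linarith

/-- The extension of the Riesz–Kantorovich sup to all of `E`. -/
def posFun (x : E) : ℝ := sP f x⁺ - sP f x⁻

lemma posFun_add (x y : E) : posFun f (x + y) = posFun f x + posFun f y := by
  have h : (x + y)⁺ - (x + y)⁻ = (x⁺ + y⁺) - (x⁻ + y⁻) := by
    rw [posPart_sub_negPart]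
    have h2 : (x⁺ + y⁺) - (x⁻ + y⁻) = (x⁺ - x⁻) + (y⁺ - y⁻) := by abel
    rw [h2, posPart_sub_negPart, posPart_sub_negPart]
  have := sP_sub_sP f (posPart_nonneg (x+y)) (negPart_nonneg (x+y))
    (add_nonneg (posPart_nonneg x) (posPart_nonneg y))
    (add_nonneg (negPart_nonneg x) (negPart_nonneg y)) h
  unfold posFun
  rw [this, sP_add f (posPart_nonneg x) (posPart_nonneg y),
    sP_add f (negPart_nonneg x) (negPart_nonneg y)]
  ring

lemma posFun_of_nonneg {x : E} (hx : 0 ≤ x) : posFun f x = sP f x := by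
  unfold posFun
  rw [posPart_eq_self.2 hx, negPart_eq_zero.2 hx, sP_zero]
  ring

lemma abs_posFun_le (x : E) : |posFun f x| ≤ ‖f‖ * ‖x‖ := by
  have h1 : posFun f x ≤ ‖f‖ * ‖x‖ := by
    unfold posFun
    have := sP_nonneg f (negPart_nonneg x)
    have h2 := (sP_le_norm f (posPart_nonneg x)).trans
      (by nlinarith [norm_posPart_le x, norm_nonneg f] : ‖f‖ * ‖x⁺‖ ≤ ‖f‖ * ‖x‖)
    linarith
  have h2 : -(‖f‖ * ‖x‖) ≤ posFun f x := by
    unfold posFun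
    have := sP_nonneg f (posPart_nonneg x)
    have h2 := (sP_le_norm f (negPart_nonneg x)).trans
      (by nlinarith [norm_negPart_le x, norm_nonneg f] : ‖f‖ * ‖x⁻‖ ≤ ‖f‖ * ‖x‖)
    linarith
  exact abs_le.2 ⟨h2, h1⟩

/-- The positive part of a functional, as a continuous linear map. -/
def posCLM : E →L[ℝ] ℝ :=
  (AddMonoidHom.mk' (posFun f) (posFun_add f)).toRealLinearMap <| by
    have : LipschitzWith (‖f‖.toNNReal) (posFun f) := by
      refine LipschitzWith.of_dist_le_mul fun a b => ?_
      have : posFun f a - posFun f b = posFun f (a - b) := by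
        have h := posFun_add f (a - b) b
        simp only [sub_add_cancel] at h
        linarith
      rw [Real.dist_eq, this, dist_eq_norm]
      simpa [Real.coe_toNNReal _ (norm_nonneg f)] using abs_posFun_le f (a - b)
    exact this.continuous

@[simp] lemma posCLM_apply (x : E) : posCLM f x = posFun f x := by
  simp [posCLM, AddMonoidHom.coe_toRealLinearMap]; rfl

lemma posCLM_pos {x : E} (hx : 0 ≤ x) : 0 ≤ posCLM f x := by
  rw [posCLM_apply, posFun_of_nonneg f hx]; exact sP_nonneg f hx

lemma le_posCLM {x : E} (hx : 0 ≤ x) : f x ≤ posCLM f x := by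
  rw [posCLM_apply, posFun_of_nonneg f hx]
  exact le_sP f ⟨hx, le_rfl⟩

lemma norm_le_of_pos {g : E →L[ℝ] ℝ} {C : ℝ} (hC : 0 ≤ C)
    (hpos : ∀ x : E, 0 ≤ x → 0 ≤ g x) (hbd : ∀ x : E, 0 ≤ x → g x ≤ C * ‖x‖) : ‖g‖ ≤ C := by
  refine g.opNorm_le_bound hC fun x => ?_
  have hx : g x = g x⁺ - g x⁻ := by rw [← map_sub, posPart_sub_negPart]
  have h1 : 0 ≤ g x⁺ := hpos _ (posPart_nonneg x)
  have h2 : 0 ≤ g x⁻ := hpos _ (negPart_nonneg x)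
  have h3 := (hbd _ (posPart_nonneg x)).trans
    (by nlinarith [norm_posPart_le x] : C * ‖x⁺‖ ≤ C * ‖x‖)
  have h4 := (hbd _ (negPart_nonneg x)).trans
    (by nlinarith [norm_negPart_le x] : C * ‖x⁻‖ ≤ C * ‖x‖)
  rw [Real.norm_eq_abs, hx]
  rw [abs_le]; constructor <;> linarith

lemma norm_posCLM_le : ‖posCLM f‖ ≤ ‖f‖ := by
  refine norm_le_of_pos (norm_nonneg f) (fun x hx => posCLM_pos f hx) fun x hx => ?_
  rw [posCLM_apply, posFun_of_nonneg f hx]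
  exact sP_le_norm f hx

/-- The negative part. -/
def negCLM : E →L[ℝ] ℝ := posCLM f - f

lemma negCLM_pos {x : E} (hx : 0 ≤ x) : 0 ≤ negCLM f x := by
  simp only [negCLM, ContinuousLinearMap.sub_apply, sub_nonneg]
  exact le_posCLM f hx

lemma norm_negCLM_le : ‖negCLM f‖ ≤ ‖f‖ := by
  refine norm_le_of_pos (norm_nonneg f) (fun x hx => negCLM_pos f hx) fun x hx => ?_
  simp only [negCLM, ContinuousLinearMap.sub_apply]
  rw [posCLM_apply, posFun_of_nonneg f hx, sub_le_iff_le_add]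
  refine sP_le f hx fun y hy => ?_
  have hkey : f y - f x ≤ ‖f‖ * ‖x‖ := by
    have : f y - f x = f (y - x) := by rw [map_sub]
    rw [this]
    refine (le_abs_self _).trans ?_
    refine (f.le_opNorm _).trans ?_
    have : ‖y - x‖ ≤ ‖x‖ := by
      rw [← norm_neg, neg_sub]
      refine HasSolidNorm.solid ?_
      rw [abs_of_nonneg (sub_nonneg.2 hy.2), abs_of_nonneg (hy.1.trans hy.2)]
      exact sub_le_self _ hy.1
    nlinarith [norm_nonneg f]
  linarith

lemma posCLM_sub_negCLM : posCLM f - negCLM f = f := by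
  simp [negCLM]

end PosDev2

namespace HellyDev

variable {X : Type*} [NormedAddCommGroup X] [NormedSpace ℝ X]

/-- Helly's theorem: finitely many linear conditions prescribed by a bidual element can be
approximately realized by an element of the space, with norm control. -/
theorem helly {m : ℕ} (f : Fin m → X →L[ℝ] ℝ) (ξ : (X →L[ℝ] ℝ) →L[ℝ] ℝ)
    {ε : ℝ} (hε : 0 < ε) :
    ∃ x : X, (∀ i, f i x = ξ (f i)) ∧ ‖x‖ < ‖ξ‖ + ε := by
  classical
  -- the affine system is solvable
  set T : X →ₗ[ℝ] (Fin m → ℝ) := LinearMap.pi (fun i => (f i : X →ₗ[ℝ] ℝ)) with hT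
  set c : Fin m → ℝ := fun i => ξ (f i) with hc
  have hcmem : c ∈ LinearMap.range T := by
    by_contra hcm
    obtain ⟨lam, hlam0, hlambot⟩ :=
      Submodule.exists_dual_map_eq_bot_of_notMem hcm inferInstance
    have hlamT : ∀ v : X, lam (T v) = 0 := by
      intro v
      have : lam (T v) ∈ (LinearMap.range T).map lam :=
        Submodule.mem_map_of_mem (LinearMap.mem_range_self T v)
      rw [hlambot] at this
      simpa using this
    have hdecomp : ∀ w : Fin m → ℝ, lam w = ∑ i, w i * lam (Pi.single i 1) := by
      intro w
      conv_lhs => rw [← Finset.univ_sum_single w]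
      rw [map_sum]
      congr 1
      ext i
      have h2 : (Pi.single i (w i) : Fin m → ℝ) = w i • (Pi.single i (1:ℝ) : Fin m → ℝ) := by
        ext j
        by_cases h : j = i <;> simp [Pi.single_apply, h]
      rw [h2, map_smul, smul_eq_mul]
    set g : X →L[ℝ] ℝ := ∑ i, lam (Pi.single i 1) • f i with hg
    have hgzero : g = 0 := by
      ext v
      have := hlamT v
      rw [hdecomp (T v)] at this
      simp only [hg, ContinuousLinearMap.sum_apply, ContinuousLinearMap.smul_apply,
        ContinuousLinearMap.zero_apply]
      have hTv : ∀ i, T v i = f i v := fun i => rfl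
      calc (∑ i, lam (Pi.single i 1) * f i v) = ∑ i, T v i * lam (Pi.single i 1) := by
            refine Finset.sum_congr rfl fun i _ => ?_
            rw [hTv, mul_comm]
      _ = 0 := this
    have : ξ g = 0 := by rw [hgzero, map_zero]
    rw [hg, map_sum] at this
    simp only [map_smul, smul_eq_mul] at this
    rw [hdecomp c] at hlam0
    refine hlam0 ?_
    rw [← this]
    refine Finset.sum_congr rfl fun i _ => mul_comm _ _
  obtain ⟨x₀, hx₀⟩ := hcmem
  have hfx₀ : ∀ i, f i x₀ = ξ (f i) := fun i => congrFun hx₀ i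
  -- norm control via the quotient by the common kernel
  set N : Submodule ℝ X := ⨅ i, LinearMap.ker (f i : X →ₗ[ℝ] ℝ) with hN
  haveI hNclosed : IsClosed (N : Set X) := by
    have : (N : Set X) = ⋂ i, (LinearMap.ker (f i : X →ₗ[ℝ] ℝ) : Set X) := by
      simp [hN, Submodule.coe_iInf]
    rw [this]
    refine isClosed_iInter fun i => ?_
    have : (LinearMap.ker (f i : X →ₗ[ℝ] ℝ) : Set X) = (f i) ⁻¹' {0} := by
      ext v; simp [LinearMap.mem_ker]
    rw [this]
    exact isClosed_singleton.preimage (f i).continuous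
  set πQ : X →L[ℝ] (X ⧸ N) :=
    LinearMap.mkContinuous N.mkQ 1 (fun v => by
      simpa using Submodule.Quotient.norm_mk_le N v) with hπQ
  by_cases hx0 : N.mkQ x₀ = 0
  · refine ⟨0, fun i => ?_, by simpa using add_pos_of_nonneg_of_pos (norm_nonneg ξ) hε⟩
    have hmem : x₀ ∈ N := by rwa [← Submodule.Quotient.mk_eq_zero, ← Submodule.mkQ_apply]
    have : f i x₀ = 0 := by
      rw [hN] at hmem
      exact (Submodule.mem_iInf _).1 hmem i
    rw [map_zero, ← hfx₀ i, this]
  · obtain ⟨G, hG1, hGx⟩ := exists_dual_vector ℝ (N.mkQ x₀) (norm_ne_zero_iff.2 hx0)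
    set g : X →L[ℝ] ℝ := G.comp πQ with hg
    have hgN : ∀ v ∈ N, g v = 0 := by
      intro v hv
      have : N.mkQ v = 0 := by rwa [Submodule.mkQ_apply, Submodule.Quotient.mk_eq_zero]
      simp only [hg, ContinuousLinearMap.comp_apply]
      have hπv : πQ v = N.mkQ v := rfl
      rw [hπv, this, map_zero]
    have hgspan : (g : X →ₗ[ℝ] ℝ) ∈
        Submodule.span ℝ (Set.range fun i => (f i : X →ₗ[ℝ] ℝ)) := by
      refine mem_span_of_iInf_ker_le_ker ?_
      intro v hv
      have hvN : v ∈ N := by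
        rw [hN, Submodule.mem_iInf]
        intro i
        have := (Submodule.mem_iInf _).1 hv i
        simpa using this
      simpa using hgN v hvN
    obtain ⟨cf, hcf⟩ := (Submodule.mem_span_range_iff_exists_fun ℝ).1 hgspan
    have hgself : g x₀ = ξ g := by
      have h1 : g x₀ = ∑ i, cf i * f i x₀ := by
        have h := LinearMap.congr_fun hcf x₀
        simp only [LinearMap.coe_sum, Finset.sum_apply, LinearMap.smul_apply,
          smul_eq_mul, ContinuousLinearMap.coe_coe] at h
        exact h.symm
      have h2 : (∑ i, cf i • f i : X →L[ℝ] ℝ) = g := by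
        apply ContinuousLinearMap.coe_injective
        apply LinearMap.ext
        intro v
        have h := LinearMap.congr_fun hcf v
        simp only [LinearMap.coe_sum, Finset.sum_apply, LinearMap.smul_apply,
          smul_eq_mul, ContinuousLinearMap.coe_coe] at h
        simpa using h
      rw [h1, ← h2, map_sum]
      refine Finset.sum_congr rfl fun i _ => ?_
      rw [map_smul, smul_eq_mul, hfx₀ i]
    have hgnorm : ‖g‖ ≤ 1 := by
      rw [hg]
      refine (G.opNorm_comp_le πQ).trans ?_
      have hπ : ‖πQ‖ ≤ 1 := LinearMap.mkContinuous_norm_le _ zero_le_one _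
      calc ‖G‖ * ‖πQ‖ ≤ 1 * 1 :=
            mul_le_mul (le_of_eq hG1) hπ (norm_nonneg πQ) zero_le_one
      _ = 1 := by ring
    have hq : ‖N.mkQ x₀‖ ≤ ‖ξ‖ := by
      have h1 : ‖N.mkQ x₀‖ = g x₀ := by
        have h2 : g x₀ = G (N.mkQ x₀) := rfl
        rw [h2]
        exact (by simpa using hGx : G (N.mkQ x₀) = ‖N.mkQ x₀‖).symm
      rw [h1, hgself]
      calc ξ g ≤ |ξ g| := le_abs_self _
      _ ≤ ‖ξ‖ * ‖g‖ := by simpa using ξ.le_opNorm g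
      _ ≤ ‖ξ‖ * 1 := mul_le_mul_of_nonneg_left hgnorm (norm_nonneg ξ)
      _ = ‖ξ‖ := by ring
    obtain ⟨x, hxq, hxn⟩ := Submodule.Quotient.norm_mk_lt (N.mkQ x₀) hε
    refine ⟨x, fun i => ?_, ?_⟩
    · have hd : x - x₀ ∈ N := by
        rw [← Submodule.Quotient.eq]
        · exact hxq
      have : f i (x - x₀) = 0 := by
        rw [hN] at hd
        exact (Submodule.mem_iInf _).1 hd i
      rw [map_sub, sub_eq_zero] at this
      rw [this, hfx₀ i]
    · refine hxn.trans_le ?_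
      linarith [hq]

end HellyDev

namespace JamesDev

open NormedSpace

/-- Hahn–Banach separation of a point from a finite-dimensional subspace, with norm control. -/
lemma sep {Y : Type*} [NormedAddCommGroup Y] [NormedSpace ℝ Y]
    (ξ : Y) {θ d0 : ℝ} (hθ : 0 < θ) (hd0 : θ < d0) {n : ℕ} (w : Fin n → Y)
    (hdist : ∀ y ∈ Submodule.span ℝ (Set.range w), d0 ≤ ‖ξ - y‖) :
    ∃ Φ : Y →L[ℝ] ℝ, ‖Φ‖ ≤ θ/d0 ∧ Φ ξ = θ ∧ ∀ k, Φ (w k) = 0 := by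
  classical
  set M : Submodule ℝ Y := Submodule.span ℝ (Set.range w) with hM
  haveI : FiniteDimensional ℝ M := FiniteDimensional.span_of_finite ℝ (Set.finite_range _)
  haveI hMc : IsClosed (M : Set Y) := M.closed_of_finiteDimensional
  set πQ : Y →L[ℝ] (Y ⧸ M) :=
    LinearMap.mkContinuous M.mkQ 1 (fun v => by
      simpa using Submodule.Quotient.norm_mk_le M v) with hπQ
  have hπ : ‖πQ‖ ≤ 1 := LinearMap.mkContinuous_norm_le _ zero_le_one _
  have hmkd0 : d0 ≤ ‖M.mkQ ξ‖ := by
    by_contra hlt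
    push_neg at hlt
    obtain ⟨u, hu, hun⟩ := Submodule.Quotient.norm_mk_lt (M.mkQ ξ) (sub_pos.2 hlt)
    have hmem : ξ - u ∈ M := by
      have : u - ξ ∈ M := (Submodule.Quotient.eq M).1 hu
      simpa using M.neg_mem this
    have := hdist (ξ - u) hmem
    simp only [sub_sub_cancel] at this
    linarith
  set d : ℝ := ‖M.mkQ ξ‖ with hd
  have hdpos : 0 < d := lt_of_lt_of_le (hθ.trans hd0) hmkd0
  have hne : M.mkQ ξ ≠ 0 := by
    intro h0
    rw [hd, h0, norm_zero] at hdpos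
    exact lt_irrefl 0 hdpos
  obtain ⟨G, hG1, hGx⟩ := exists_dual_vector ℝ (M.mkQ ξ) (norm_ne_zero_iff.2 hne)
  refine ⟨(θ/d) • (G.comp πQ), ?_, ?_, ?_⟩
  · have h1 : ‖G.comp πQ‖ ≤ 1 := by
      refine (G.opNorm_comp_le πQ).trans ?_
      calc ‖G‖ * ‖πQ‖ ≤ 1 * 1 := mul_le_mul (le_of_eq hG1) hπ (norm_nonneg πQ) zero_le_one
      _ = 1 := by ring
    have h0 : ‖(θ/d) • G.comp πQ‖ ≤ ‖(θ/d : ℝ)‖ * ‖G.comp πQ‖ :=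
      ContinuousLinearMap.opNorm_smul_le _ _
    have h2 : ‖(θ/d : ℝ)‖ = θ/d := by
      rw [Real.norm_eq_abs]; exact abs_of_nonneg (div_nonneg hθ.le hdpos.le)
    have h3 : θ/d ≤ θ/d0 := div_le_div_of_nonneg_left hθ.le (hθ.trans hd0) hmkd0
    rw [h2] at h0
    refine h0.trans ?_
    nlinarith [div_nonneg hθ.le hdpos.le]
  · have h1 : G (πQ ξ) = d := by
      have h2 : πQ ξ = M.mkQ ξ := rfl
      rw [h2, hd]
      simpa using hGx
    simp only [ContinuousLinearMap.smul_apply, ContinuousLinearMap.comp_apply, h1,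
      smul_eq_mul]
    field_simp
  · intro k
    have hmem : w k ∈ M := Submodule.subset_span ⟨k, rfl⟩
    have h0 : πQ (w k) = 0 := by
      have h2 : πQ (w k) = M.mkQ (w k) := rfl
      rw [h2, Submodule.mkQ_apply, Submodule.Quotient.mk_eq_zero]
      exact hmem
    simp [h0]

variable {X : Type*} [NormedAddCommGroup X] [NormedSpace ℝ X]

lemma nextF (ξ : (X →L[ℝ] ℝ) →L[ℝ] ℝ) {θ d0 : ℝ} (hθ : 0 < θ) (hd0 : θ < d0)
    {n : ℕ} (v : Fin n → X)
    (hdist : ∀ y ∈ Submodule.span ℝ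
      (Set.range fun k => inclusionInDoubleDual ℝ X (v k)), d0 ≤ ‖ξ - y‖) :
    ∃ f : X →L[ℝ] ℝ, ‖f‖ ≤ 1 ∧ ξ f = θ ∧ ∀ k, f (v k) = 0 := by
  obtain ⟨Φ, hΦnorm, hΦξ, hΦv⟩ :=
    sep ξ hθ hd0 (fun k => inclusionInDoubleDual ℝ X (v k)) hdist
  set Fam : Fin (n+1) → ((X →L[ℝ] ℝ) →L[ℝ] ℝ) :=
    Fin.cons ξ (fun k => inclusionInDoubleDual ℝ X (v k)) with hFam
  have hε : (0:ℝ) < 1 - θ/d0 := by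
    have : θ/d0 < 1 := (div_lt_one (hθ.trans hd0)).2 hd0
    linarith
  obtain ⟨f, hf1, hf2⟩ := HellyDev.helly Fam Φ hε
  refine ⟨f, ?_, ?_, ?_⟩
  · linarith
  · have := hf1 0
    simpa [hFam, hΦξ] using this
  · intro k
    have := hf1 k.succ
    rw [hFam] at this
    simp only [Fin.cons_succ] at this
    rw [hΦv k] at this
    rw [← NormedSpace.dual_def ℝ X (v k) f]
    exact this

/-- Data for the James-type construction: finite families of functionals and points
witnessing non-reflexivity quantitatively. -/
structure JData (X : Type*) [NormedAddCommGroup X] [NormedSpace ℝ X]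
    (ξ : (X →L[ℝ] ℝ) →L[ℝ] ℝ) (θ : ℝ) (n : ℕ) where
  F : Fin n → X →L[ℝ] ℝ
  pt : Fin n → X
  hF : ∀ i, ‖F i‖ ≤ 1
  hpt : ∀ i, ‖pt i‖ ≤ 1
  hξF : ∀ i, ξ (F i) = θ
  hmat : ∀ i k : Fin n, i ≤ k → F i (pt k) = θ
  hmat0 : ∀ i k : Fin n, k < i → F i (pt k) = 0

lemma step (ξ : (X →L[ℝ] ℝ) →L[ℝ] ℝ) {θ d0 : ℝ} (hθ : 0 < θ) (hd0 : θ < d0)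
    (hξn : ‖ξ‖ ≤ 1/2)
    (hglob : ∀ x : X, d0 ≤ ‖ξ - inclusionInDoubleDual ℝ X x‖)
    {n : ℕ} (D : JData X ξ θ n) :
    ∃ D' : JData X ξ θ (n+1), (∀ i : Fin n, D'.F i.castSucc = D.F i) ∧
      (∀ i : Fin n, D'.pt i.castSucc = D.pt i) := by
  classical
  have hdist : ∀ y ∈ Submodule.span ℝ
      (Set.range fun k => inclusionInDoubleDual ℝ X (D.pt k)), d0 ≤ ‖ξ - y‖ := by
    intro y hy
    have hyr : y ∈ LinearMap.range (inclusionInDoubleDual ℝ X : X →ₗ[ℝ] _) := by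
      refine Submodule.span_le.2 ?_ hy
      rintro _ ⟨k, rfl⟩
      exact ⟨D.pt k, rfl⟩
    obtain ⟨x, rfl⟩ := hyr
    exact hglob x
  obtain ⟨f, hf1, hf2, hf3⟩ := nextF ξ hθ hd0 D.pt hdist
  set F' : Fin (n+1) → X →L[ℝ] ℝ := Fin.snoc D.F f with hF'
  have hF'cast : ∀ i : Fin n, F' i.castSucc = D.F i := fun i => Fin.snoc_castSucc _ _ _
  have hF'last : F' (Fin.last n) = f := Fin.snoc_last _ _
  have hξF' : ∀ i, ξ (F' i) = θ := by
    refine Fin.lastCases ?_ ?_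
    · rw [hF'last]; exact hf2
    · intro i; rw [hF'cast]; exact D.hξF i
  obtain ⟨x, hx1, hx2⟩ := HellyDev.helly F' ξ (by norm_num : (0:ℝ) < 1/2)
  set pt' : Fin (n+1) → X := Fin.snoc D.pt x with hpt'
  have hpt'cast : ∀ i : Fin n, pt' i.castSucc = D.pt i := fun i => Fin.snoc_castSucc _ _ _
  have hpt'last : pt' (Fin.last n) = x := Fin.snoc_last _ _
  refine ⟨⟨F', pt', ?_, ?_, hξF', ?_, ?_⟩, hF'cast, hpt'cast⟩
  · refine Fin.lastCases ?_ ?_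
    · rw [hF'last]; exact hf1
    · intro i; rw [hF'cast]; exact D.hF i
  · refine Fin.lastCases ?_ ?_
    · rw [hpt'last]; linarith
    · intro i; rw [hpt'cast]; exact D.hpt i
  · intro i k hik
    refine Fin.lastCases (motive := fun k => i ≤ k → F' i (pt' k) = θ) ?_ ?_ k hik
    · intro _
      rw [hpt'last, hx1 i, hξF' i]
    · intro k0 hik0
      refine Fin.lastCases (motive := fun i => i ≤ k0.castSucc → F' i (pt' k0.castSucc) = θ)
        ?_ ?_ i hik0
      · intro hle
        exact absurd hle (not_le.2 (Fin.castSucc_lt_last k0))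
      · intro i0 hle
        rw [hF'cast, hpt'cast]
        exact D.hmat i0 k0 (by exact_mod_cast hle)
  · intro i k hki
    refine Fin.lastCases (motive := fun i => k < i → F' i (pt' k) = 0) ?_ ?_ i hki
    · intro hk
      have hkne : k ≠ Fin.last n := ne_of_lt hk
      obtain ⟨k0, rfl⟩ := Fin.exists_castSucc_eq.2 hkne
      rw [hF'last, hpt'cast]
      exact hf3 k0
    · intro i0 hk
      have hkne : k ≠ Fin.last n := by
        intro h
        rw [h] at hk
        exact absurd hk (not_lt.2 (Fin.le_last _))
      obtain ⟨k0, rfl⟩ := Fin.exists_castSucc_eq.2 hkne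
      rw [hF'cast, hpt'cast]
      exact D.hmat0 i0 k0 (by exact_mod_cast hk)

lemma james [CompleteSpace X] {Ξ : (X →L[ℝ] ℝ) →L[ℝ] ℝ}
    (hΞ : Ξ ∉ Set.range (inclusionInDoubleDual ℝ X)) :
    ∃ (θ : ℝ) (F : ℕ → X →L[ℝ] ℝ) (x : ℕ → X), 0 < θ ∧
      (∀ n, ‖F n‖ ≤ 1) ∧ (∀ n, ‖x n‖ ≤ 1) ∧
      (∀ n k, n ≤ k → F n (x k) = θ) ∧ (∀ n k, k < n → F n (x k) = 0) := by
  classical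
  -- normalize
  have hΞ0 : Ξ ≠ 0 := by
    rintro rfl
    exact hΞ ⟨0, map_zero _⟩
  have hΞpos : 0 < ‖Ξ‖ := by
    rcases (norm_nonneg Ξ).lt_or_eq with h' | h'
    · exact h'
    · exact absurd ((ContinuousLinearMap.opNorm_zero_iff Ξ).1 h'.symm) hΞ0
  set ξ : (X →L[ℝ] ℝ) →L[ℝ] ℝ := (2 * ‖Ξ‖)⁻¹ • Ξ with hξdef
  have hΞeq : Ξ = (2 * ‖Ξ‖) • ξ := by
    rw [hξdef, smul_smul, mul_inv_cancel₀ (ne_of_gt (by positivity)), one_smul]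
  have hξnorm : ‖ξ‖ = 1/2 := by
    have h1 := ContinuousLinearMap.opNorm_smul_le ((2 * ‖Ξ‖)⁻¹) Ξ
    have h2 := ContinuousLinearMap.opNorm_smul_le (2 * ‖Ξ‖) ξ
    rw [← hΞeq] at h2
    have hc1 : ‖(2 * ‖Ξ‖)⁻¹‖ = (2 * ‖Ξ‖)⁻¹ := Real.norm_of_nonneg (by positivity)
    have hc2 : ‖(2 * ‖Ξ‖)‖ = 2 * ‖Ξ‖ := Real.norm_of_nonneg (by positivity)
    rw [hc1] at h1
    rw [hc2] at h2
    have hval : (2 * ‖Ξ‖)⁻¹ * ‖Ξ‖ = 1/2 := by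
      field_simp
    have hξle : ‖ξ‖ ≤ 1/2 := by
      rw [← hval]
      exact h1
    have hξge : 1/2 ≤ ‖ξ‖ := by nlinarith
    linarith
  have hξnotin : ξ ∉ Set.range (inclusionInDoubleDual ℝ X) := by
    rintro ⟨x, hx⟩
    refine hΞ ⟨(2 * ‖Ξ‖) • x, ?_⟩
    rw [map_smul, hx, hξdef, smul_smul]
    rw [mul_inv_cancel₀ (by positivity), one_smul]
  -- the range of the canonical embedding is closed
  have hisom : Isometry (inclusionInDoubleDual ℝ X) := (inclusionInDoubleDualLi ℝ).isometry
  have hclosed : IsClosed (Set.range (inclusionInDoubleDual ℝ X)) :=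
    hisom.isClosedEmbedding.isClosed_range
  set d0 : ℝ := Metric.infDist ξ (Set.range (inclusionInDoubleDual ℝ X)) with hd0def
  have hd0pos : 0 < d0 :=
    (hclosed.notMem_iff_infDist_pos (Set.range_nonempty _)).1 hξnotin
  set θ : ℝ := d0/2 with hθdef
  have hθpos : 0 < θ := by positivity
  have hθd0 : θ < d0 := by rw [hθdef]; linarith
  have hglob : ∀ x : X, d0 ≤ ‖ξ - inclusionInDoubleDual ℝ X x‖ := by
    intro x
    have := Metric.infDist_le_dist_of_mem (x := ξ)
      (Set.mem_range_self (f := inclusionInDoubleDual ℝ X) x)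
    have heq : dist ξ (inclusionInDoubleDual ℝ X x) = ‖ξ - inclusionInDoubleDual ℝ X x‖ :=
      dist_eq_norm ξ (inclusionInDoubleDual ℝ X x)
    exact le_of_le_of_eq this heq
  -- recursive construction
  have hstep := fun n (D : JData X ξ θ n) => step ξ hθpos hθd0 (le_of_eq hξnorm) hglob D
  let C : ∀ n, JData X ξ θ n := fun n =>
    Nat.rec
      ⟨Fin.elim0, Fin.elim0, fun i => i.elim0, fun i => i.elim0, fun i => i.elim0,
        fun i => i.elim0, fun i => i.elim0⟩
      (fun n D => (hstep n D).choose) n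
  have hCsucc : ∀ n, C (n+1) = (hstep n (C n)).choose := fun n => rfl
  have hagree : ∀ n, (∀ i : Fin n, (C (n+1)).F i.castSucc = (C n).F i) ∧
      (∀ i : Fin n, (C (n+1)).pt i.castSucc = (C n).pt i) := by
    intro n
    rw [hCsucc n]
    exact (hstep n (C n)).choose_spec
  set Fs : ℕ → X →L[ℝ] ℝ := fun n => (C (n+1)).F (Fin.last n) with hFs
  set xs : ℕ → X := fun n => (C (n+1)).pt (Fin.last n) with hxs
  have hCF : ∀ n (i : Fin n), (C n).F i = Fs i := by
    intro n
    induction n with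
    | zero => exact fun i => i.elim0
    | succ n ih =>
      intro i
      refine Fin.lastCases ?_ ?_ i
      · rfl
      · intro i0
        rw [(hagree n).1 i0, ih i0]
        rfl
  have hCx : ∀ n (i : Fin n), (C n).pt i = xs i := by
    intro n
    induction n with
    | zero => exact fun i => i.elim0
    | succ n ih =>
      intro i
      refine Fin.lastCases ?_ ?_ i
      · rfl
      · intro i0
        rw [(hagree n).2 i0, ih i0]
        rfl
  refine ⟨θ, Fs, xs, hθpos, fun n => (C (n+1)).hF _, fun n => (C (n+1)).hpt _, ?_, ?_⟩
  · intro n k hnk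
    have h1 : (C (k+1)).F ⟨n, Nat.lt_succ_of_le hnk⟩ = Fs n := hCF (k+1) ⟨n, _⟩
    have h2 : (C (k+1)).pt (Fin.last k) = xs k := rfl
    rw [← h1, ← h2]
    exact (C (k+1)).hmat _ _ (Fin.le_last _)
  · intro n k hkn
    have h1 : (C (n+1)).pt ⟨k, Nat.lt_succ_of_lt hkn⟩ = xs k := hCx (n+1) ⟨k, _⟩
    have h2 : (C (n+1)).F (Fin.last n) = Fs n := rfl
    rw [← h1, ← h2]
    refine (C (n+1)).hmat0 _ _ ?_
    simp only [Fin.lt_def, Fin.last]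
    exact hkn

end JamesDev

namespace FinalDev

open JamesDev PosDev PosDev2 NormedSpace

lemma cluster_eq {α : Type*} [TopologicalSpace α] [T2Space α] {u : ℕ → α} {c a : α}
    (hc : MapClusterPt c atTop u) (ht : Tendsto u atTop (𝓝 a)) : c = a := by
  have h1 : ClusterPt c (Filter.map u atTop) := hc
  have h2 : Filter.map u atTop ≤ 𝓝 a := ht
  have h3 : (𝓝 c ⊓ 𝓝 a).NeBot := by
    refine Filter.NeBot.mono h1 ?_
    exact inf_le_inf_left _ h2
  exact eq_of_nhds_neBot h3

theorem main {E : Type*} [NormedAddCommGroup E] [Lattice E] [IsOrderedAddMonoid E] [HasSolidNorm E] [NormedSpace ℝ E]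
    [CompleteSpace E] (hE : ¬ Function.Surjective (inclusionInDoubleDual ℝ E)) :
    ∃ f : ℕ → E →L[ℝ] ℝ,
      (∀ n, PositiveFunctional (f n)) ∧ (∀ n, ‖f n‖ ≤ 1) ∧
      ¬ ∃ (φ : ℕ → ℕ) (g : E →L[ℝ] ℝ), StrictMono φ ∧
        ∀ Φ : (E →L[ℝ] ℝ) →L[ℝ] ℝ, Tendsto (fun k => Φ (f (φ k))) atTop (𝓝 (Φ g)) := by
  classical
  -- a bidual element not in the range of the canonical embedding
  have hE' : ¬ ∀ y, ∃ x, inclusionInDoubleDual ℝ E x = y := hE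
  push_neg at hE'
  obtain ⟨Ξ, hΞ'⟩ := hE'
  have hΞ : Ξ ∉ Set.range (inclusionInDoubleDual ℝ E) := by
    rintro ⟨x, hx⟩
    exact hΞ' x hx
  obtain ⟨θ, F, x, hθpos, hFnorm, hxnorm, hmat, hmat0⟩ := james hΞ
  by_contra hcon
  push_neg at hcon
  obtain ⟨φ1, g1, hφ1, hg1⟩ := hcon (fun n => posCLM (F n))
    (fun n x hx => posCLM_pos (F n) hx)
    (fun n => (norm_posCLM_le (F n)).trans (hFnorm n))
  obtain ⟨φ2, g2, hφ2, hg2⟩ := hcon (fun n => negCLM (F (φ1 n)))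
    (fun n x hx => negCLM_pos (F (φ1 n)) hx)
    (fun n => (norm_negCLM_le (F (φ1 n))).trans (hFnorm (φ1 n)))
  set ψ : ℕ → ℕ := φ1 ∘ φ2 with hψdef
  have hψ : StrictMono ψ := hφ1.comp hφ2
  set g : E →L[ℝ] ℝ := g1 - g2 with hgdef
  -- weak convergence of the James functionals along ψ
  have hweak : ∀ Φ : (E →L[ℝ] ℝ) →L[ℝ] ℝ,
      Tendsto (fun k => Φ (F (ψ k))) atTop (𝓝 (Φ g)) := by
    intro Φ
    have h1 : Tendsto (fun k => Φ (posCLM (F (φ1 (φ2 k))))) atTop (𝓝 (Φ g1)) :=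
      (hg1 Φ).comp hφ2.tendsto_atTop
    have h2 : Tendsto (fun k => Φ (negCLM (F (φ1 (φ2 k))))) atTop (𝓝 (Φ g2)) := hg2 Φ
    have heq : ∀ k, Φ (F (ψ k)) =
        Φ (posCLM (F (φ1 (φ2 k)))) - Φ (negCLM (F (φ1 (φ2 k)))) := by
      intro k
      rw [← map_sub, posCLM_sub_negCLM]
      rfl
    have hg' : Φ g = Φ g1 - Φ g2 := by rw [hgdef, map_sub]
    rw [hg']
    refine Tendsto.congr (fun k => (heq k).symm) (h1.sub h2)
  -- the weak limit kills all the points of the James sequence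
  have hgx : ∀ k, g (x k) = 0 := by
    intro k
    have ht := hweak (inclusionInDoubleDual ℝ E (x k))
    have hev : Tendsto (fun j => inclusionInDoubleDual ℝ E (x k) (F (ψ j))) atTop (𝓝 0) := by
      refine Tendsto.congr' ?_ tendsto_const_nhds
      filter_upwards [Filter.eventually_ge_atTop (k+1)] with j hj
      have hψj : k < ψ j := lt_of_lt_of_le (Nat.lt_of_succ_le hj) (hψ.le_apply)
      rw [NormedSpace.dual_def]
      exact (hmat0 (ψ j) k hψj).symm
    have := tendsto_nhds_unique ht hev
    rw [NormedSpace.dual_def] at this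
    exact this
  -- a weak* cluster point of the James points
  set u : ℕ → WeakDual ℝ (E →L[ℝ] ℝ) :=
    fun k => StrongDual.toWeakDual (inclusionInDoubleDual ℝ E (x k)) with hudef
  have humem : ∀ k, u k ∈ WeakDual.toStrongDual ⁻¹' Metric.closedBall 0 1 := by
    intro k
    simp only [Set.mem_preimage, Metric.mem_closedBall]
    have h1 : WeakDual.toStrongDual (u k) = inclusionInDoubleDual ℝ E (x k) := rfl
    rw [h1]
    have h2 : dist (inclusionInDoubleDual ℝ E (x k)) 0 = ‖inclusionInDoubleDual ℝ E (x k)‖ :=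
      dist_zero_right (inclusionInDoubleDual ℝ E (x k))
    rw [h2]
    exact le_trans (NormedSpace.double_dual_bound ℝ E (x k)) (hxnorm k)
  obtain ⟨Φ0, _, hΦ0cl⟩ := (WeakDual.isCompact_closedBall (𝕜 := ℝ) (E := E →L[ℝ] ℝ) 0 1
    ).exists_mapClusterPt (f := (atTop : Filter ℕ)) (u := u)
    (by rw [Filter.le_principal_iff, Filter.mem_map]
        exact Filter.Eventually.of_forall humem)
  -- evaluation at the cluster point
  have heval : ∀ y : E →L[ℝ] ℝ, MapClusterPt (Φ0 y) atTop (fun k => y (x k)) := by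
    intro y
    have hcont : Continuous (fun Φ : WeakDual ℝ (E →L[ℝ] ℝ) => Φ y) :=
      WeakDual.eval_continuous y
    have := hΦ0cl.continuousAt_comp (f := fun Φ : WeakDual ℝ (E →L[ℝ] ℝ) => Φ y)
      hcont.continuousAt
    exact this
  have hteta : ∀ n, (WeakDual.toStrongDual Φ0) (F n) = θ := by
    intro n
    refine cluster_eq (heval (F n)) ?_
    refine Tendsto.congr' ?_ tendsto_const_nhds
    filter_upwards [Filter.eventually_ge_atTop n] with k hk
    exact (hmat n k hk).symm
  have hzero : (WeakDual.toStrongDual Φ0) g = 0 := by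
    refine cluster_eq (heval g) ?_
    exact Tendsto.congr (fun k => (hgx k).symm) tendsto_const_nhds
  have hfin := hweak (WeakDual.toStrongDual Φ0)
  have hconst : Tendsto (fun k => (WeakDual.toStrongDual Φ0) (F (ψ k))) atTop (𝓝 θ) :=
    Tendsto.congr (fun k => (hteta (ψ k)).symm) tendsto_const_nhds
  have hθeq := tendsto_nhds_unique hconst hfin
  rw [hzero] at hθeq
  exact absurd hθeq (ne_of_gt hθpos)

end FinalDev


/-- If a Banach lattice `E` is not reflexive, then there is a sequence of positive
functionals in the closed unit ball of `E*` with no weakly convergent subsequence. -/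
theorem exists_positive_seq_no_weakly_convergent_subsequence
    {E : Type*} [NormedAddCommGroup E] [Lattice E] [IsOrderedAddMonoid E] [HasSolidNorm E] [NormedSpace ℝ E] [PosSMulStrictMono ℝ E] [PosSMulReflectLT ℝ E]
    [CompleteSpace E] (hE : ¬ ReflexiveSpace E) :
    ∃ f : ℕ → E →L[ℝ] ℝ,
      (∀ n, PositiveFunctional (f n)) ∧ (∀ n, ‖f n‖ ≤ 1) ∧
      ¬ ∃ (φ : ℕ → ℕ) (g : E →L[ℝ] ℝ), StrictMono φ ∧
        ∀ Φ : (E →L[ℝ] ℝ) →L[ℝ] ℝ, Tendsto (fun k => Φ (f (φ k))) atTop (𝓝 (Φ g)) := by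
  exact FinalDev.main hE
end
end
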